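/- With Sq² on the Z/2Z-span of (k,n)-truncated checkerboard Young diagrams as above, the kernel and image of Sq² decompose along irredundant diagrams: writing Ā(Λ) for the set of all diagrams obtained from an irredundant diagram Λ by adding any number of white boxes, the whole space is the direct sum over irredundant Λ of the spans of Ā(Λ), and Ker(Sq²) = ⊕_Λ (Ker(Sq²) ∩ span Ā(Λ)) and Im(Sq²) = ⊕_Λ (Im(Sq²) ∩ span Ā(Λ)), the sums over irredundant Λ. -/

import Mathlib

attribute [local instance] Classical.propDecidable

/-- A Young diagram, encoded by its sequence of row lengths: weakly decreasing and
eventually zero. -/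
def IsYoungDiagram (Λ : ℕ → ℕ) : Prop :=
  (∀ i j : ℕ, i ≤ j → Λ j ≤ Λ i) ∧ ∃ N, ∀ i, N ≤ i → Λ i = 0

/-- A `(k,n)`-truncated Young diagram: at most `k` rows, each of length at most `n - k`. -/
def IsTruncated (k n : ℕ) (Λ : ℕ → ℕ) : Prop :=
  IsYoungDiagram Λ ∧ (∀ i, k ≤ i → Λ i = 0) ∧ ∀ i, Λ i ≤ n - k

/-- Checkerboard coloring (`tw = false`: untwisted; `tw = true`: twisted). -/
def RemovableCB (tw : Bool) (Λ : ℕ → ℕ) (i : ℕ) : Prop :=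
  Λ (i + 1) < Λ i ∧ (i + Λ i) % 2 = (if tw then 1 else 0)

def AddableCB (tw : Bool) (k n : ℕ) (Λ : ℕ → ℕ) (i : ℕ) : Prop :=
  i < k ∧ Λ i < n - k ∧ (i = 0 ∨ Λ i < Λ (i - 1)) ∧ (i + Λ i) % 2 = (if tw then 0 else 1)

def IrredundantCB (tw : Bool) (Λ : ℕ → ℕ) : Prop := ∀ i, ¬ RemovableCB tw Λ i

/-- Adding one box at the end of row `i`. -/
def addOne (Λ : ℕ → ℕ) (i : ℕ) : ℕ → ℕ := Function.update Λ i (Λ i + 1)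

/-- `Λ' ∈ Ā(Λ)`: `Λ'` is obtained from `Λ` by adding finitely many white boxes. -/
def InAbar (tw : Bool) (k n : ℕ) (Λ Λ' : ℕ → ℕ) : Prop :=
  Relation.ReflTransGen (fun f g => ∃ i, AddableCB tw k n f i ∧ g = addOne f i) Λ Λ'

noncomputable def extB (k n : ℕ) {V : Type*} [AddCommGroup V] [Module (ZMod 2) V]
    (B : Module.Basis {Λ : ℕ → ℕ // IsTruncated k n Λ} (ZMod 2) V) (f : ℕ → ℕ) : V :=
  if h : IsTruncated k n f then B ⟨f, h⟩ else 0

/-- The span of `Ā(Λ)` inside `V`. -/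
noncomputable def spanAbar (tw : Bool) (k n : ℕ) {V : Type*} [AddCommGroup V]
    [Module (ZMod 2) V] (B : Module.Basis {Λ : ℕ → ℕ // IsTruncated k n Λ} (ZMod 2) V)
    (Λ : {Λ : ℕ → ℕ // IsTruncated k n Λ}) : Submodule (ZMod 2) V :=
  Submodule.span (ZMod 2)
    (⇑B '' {Λ' : {Λ : ℕ → ℕ // IsTruncated k n Λ} | InAbar tw k n Λ.1 Λ'.1})


section Comb

variable {tw : Bool} {k n : ℕ}

lemma addOne_same (f : ℕ → ℕ) (i : ℕ) : addOne f i i = f i + 1 := by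
  simp [addOne]

lemma addOne_ne (f : ℕ → ℕ) {i j : ℕ} (h : j ≠ i) : addOne f i j = f j := by
  simp [addOne, Function.update_of_ne h]

lemma antitone_of_adj {g : ℕ → ℕ} (h : ∀ m, g (m + 1) ≤ g m) :
    ∀ p q : ℕ, p ≤ q → g q ≤ g p := by
  have key : ∀ d p : ℕ, g (p + d) ≤ g p := by
    intro d
    induction d with
    | zero => intro p; simp
    | succ d ih =>
      intro p
      calc g (p + (d + 1)) = g ((p + 1) + d) := by ring_nf
        _ ≤ g (p + 1) := ih (p + 1)
        _ ≤ g p := h p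
  intro p q hpq
  have := key (q - p) p
  rwa [Nat.add_sub_cancel' hpq] at this

lemma truncated_addOne {f : ℕ → ℕ} {i : ℕ} (hf : IsTruncated k n f)
    (ha : AddableCB tw k n f i) : IsTruncated k n (addOne f i) := by
  obtain ⟨⟨hmono, N, hN⟩, hk, hb⟩ := hf
  obtain ⟨hik, hlt, hrow, _⟩ := ha
  refine ⟨⟨?_, ⟨max N k, fun m hm => ?_⟩⟩, fun m hm => ?_, fun m => ?_⟩
  · refine fun p q hpq => antitone_of_adj (fun m => ?_) p q hpq
    rcases eq_or_ne (m + 1) i with h1 | h1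
    · rcases hrow with h0 | h0
      · omega
      · rw [h1, addOne_same, addOne_ne f (by omega : m ≠ i)]
        have : m = i - 1 := by omega
        subst this; omega
    · rcases eq_or_ne m i with h2 | h2
      · subst h2
        rw [addOne_ne f h1, addOne_same]
        have := hmono m (m + 1) (by omega)
        omega
      · rw [addOne_ne f h1, addOne_ne f h2]
        exact hmono m (m + 1) (by omega)
  · rw [addOne_ne f (by omega : m ≠ i)]
    exact hN m (by omega)
  · rw [addOne_ne f (by omega : m ≠ i)]
    exact hk m hm
  · rcases eq_or_ne m i with h2 | h2
    · rw [h2, addOne_same]; omega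
    · rw [addOne_ne f h2]; exact hb m

lemma add_removable {f : ℕ → ℕ} {i : ℕ} (ha : AddableCB tw k n f i)
    (hle : f (i + 1) ≤ f i) : RemovableCB tw (addOne f i) i := by
  obtain ⟨_, _, _, hpar⟩ := ha
  constructor
  · rw [addOne_ne f (by omega : i + 1 ≠ i), addOne_same]; omega
  · rw [addOne_same]
    cases tw <;> simp only [if_true, if_false, Bool.false_eq_true] at hpar ⊢ <;>
      omega

/-- Removing a removable box from a truncated diagram. -/
lemma remove_spec {g : ℕ → ℕ} {i : ℕ} (hg : IsTruncated k n g)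
    (hr : RemovableCB tw g i) :
    AddableCB tw k n (Function.update g i (g i - 1)) i ∧
      g = addOne (Function.update g i (g i - 1)) i ∧
      IsTruncated k n (Function.update g i (g i - 1)) := by
  obtain ⟨⟨hmono, N, hN⟩, hk, hb⟩ := hg
  obtain ⟨hlt, hpar⟩ := hr
  set f := Function.update g i (g i - 1) with hfdef
  have hfi : f i = g i - 1 := Function.update_self i (g i - 1) g
  have hfne : ∀ {j}, j ≠ i → f j = g j := fun {j} h => Function.update_of_ne h _ g
  have hgi : 1 ≤ g i := by omega
  have hik : i < k := by
    by_contra h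
    have := hk i (by omega)
    omega
  have hadd : AddableCB tw k n f i := by
    refine ⟨hik, by have := hb i; omega, ?_, ?_⟩
    · rcases Nat.eq_zero_or_pos i with h0 | h0
      · exact Or.inl h0
      · refine Or.inr ?_
        rw [hfi, hfne (by omega : i - 1 ≠ i)]
        have := hmono (i - 1) i (by omega)
        omega
    · rw [hfi]
      cases tw <;>
        simp only [if_true, if_false, Bool.false_eq_true] at hpar ⊢ <;> omega
  refine ⟨hadd, ?_, ?_⟩
  · funext x
    rcases eq_or_ne x i with h2 | h2
    · rw [h2, addOne_same, hfi]; omega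
    · rw [addOne_ne _ h2, hfne h2]
  · refine ⟨⟨?_, ⟨N, fun m hm => ?_⟩⟩, fun m hm => ?_, fun m => ?_⟩
    · refine fun p q hpq => antitone_of_adj (fun m => ?_) p q hpq
      rcases eq_or_ne (m + 1) i with h1 | h1
      · rw [h1, hfi, hfne (by omega : m ≠ i)]
        have := hmono m i (by omega)
        omega
      · rcases eq_or_ne m i with h2 | h2
        · subst h2
          rw [hfne h1, hfi]
          omega
        · rw [hfne h1, hfne h2]
          exact hmono m (m + 1) (by omega)
    · rcases eq_or_ne m i with h2 | h2
      · subst h2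
        exact absurd (hN m hm) (by omega)
      · rw [hfne h2]; exact hN m hm
    · rw [hfne (by omega : m ≠ i)]; exact hk m hm
    · rcases eq_or_ne m i with h2 | h2
      · subst h2; rw [hfi]; have := hb m; omega
      · rw [hfne h2]; exact hb m

/-- Weight of a truncated diagram. -/
def wt (k : ℕ) (g : ℕ → ℕ) : ℕ := ∑ i ∈ Finset.range k, g i

lemma wt_remove_lt {g : ℕ → ℕ} {i : ℕ} (hik : i < k) (hgi : 1 ≤ g i) :
    wt k (Function.update g i (g i - 1)) < wt k g := by
  unfold wt
  have hmem : i ∈ Finset.range k := Finset.mem_range.mpr hik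
  rw [Finset.sum_update_of_mem hmem, Finset.sdiff_singleton_eq_erase]
  have h2 := Finset.add_sum_erase (Finset.range k) g hmem
  omega

lemma inAbar_truncated {Λ g : ℕ → ℕ} (hΛ : IsTruncated k n Λ)
    (h : InAbar tw k n Λ g) : IsTruncated k n g := by
  induction h with
  | refl => exact hΛ
  | tail _ hstep ih =>
    obtain ⟨i, hadd, rfl⟩ := hstep
    exact truncated_addOne ih hadd

lemma core_exists : ∀ N g, wt k g = N → IsTruncated k n g →
    ∃ Λ, IsTruncated k n Λ ∧ IrredundantCB tw Λ ∧ InAbar tw k n Λ g := by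
  intro N
  induction N using Nat.strong_induction_on with
  | _ N ih =>
    intro g hwt hg
    by_cases hirr : IrredundantCB tw g
    · exact ⟨g, hg, hirr, Relation.ReflTransGen.refl⟩
    · rw [IrredundantCB] at hirr
      push_neg at hirr
      obtain ⟨i, hr⟩ := hirr
      obtain ⟨hadd, hgeq, hftr⟩ := remove_spec hg hr
      have hik : i < k := hadd.1
      have hgi : 1 ≤ g i := by have := hr.1; omega
      have hlt := wt_remove_lt (g := g) hik hgi
      obtain ⟨Λ, h1, h2, h3⟩ :=
        ih (wt k (Function.update g i (g i - 1))) (hwt ▸ hlt) _ rfl hftr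
      exact ⟨Λ, h1, h2, h3.tail ⟨i, hadd, hgeq⟩⟩

/-- Key confluence lemma: anything reachable from an irredundant `Λ` that has a removable
box can still be reached after removing that box. -/
lemma reach_remove {Λ g : ℕ → ℕ} (hirr : IrredundantCB tw Λ) (hg : InAbar tw k n Λ g) :
    ∀ f i, AddableCB tw k n f i → f (i + 1) ≤ f i → g = addOne f i → InAbar tw k n Λ f := by
  induction hg with
  | refl =>
    intro f i hadd hle hgeq
    exact absurd (hgeq ▸ add_removable hadd hle) (hirr i)
  | @tail h g hab hstep ih =>
    intro f i hadd hle hgeq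
    obtain ⟨j, haddj, hgeq'⟩ := hstep
    rcases eq_or_ne j i with hji | hji
    · subst hji
      have hhf : h = f := by
        funext x
        rcases eq_or_ne x j with h2 | h2
        · subst h2
          have : addOne h x x = addOne f x x := by rw [← hgeq', ← hgeq]
          rw [addOne_same, addOne_same] at this
          omega
        · have : addOne h j x = addOne f j x := by rw [← hgeq', ← hgeq]
          rwa [addOne_ne _ h2, addOne_ne _ h2] at this
      exact hhf ▸ hab
    · -- two different boxes were added; form the common predecessor `e`
      set e := Function.update f j (f j - 1) with hedef
      have hei : e i = f i := Function.update_of_ne (Ne.symm hji) _ f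
      have hej : e j = f j - 1 := Function.update_self j (f j - 1) f
      have hex : ∀ {x}, x ≠ j → e x = f x := fun {x} h2 => Function.update_of_ne h2 _ f
      have hgj : g j = h j + 1 := by rw [hgeq', addOne_same]
      have hfj : f j = g j := by rw [hgeq, addOne_ne f hji]
      have hgi : g i = f i + 1 := by rw [hgeq, addOne_same]
      have hhi : h i = g i := by rw [hgeq', addOne_ne h (Ne.symm hji)]
      have hfgx : ∀ {x}, x ≠ i → f x = g x := by
        intro x h2; rw [hgeq, addOne_ne f h2]
      have hhgx : ∀ {x}, x ≠ j → h x = g x := by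
        intro x h2; rw [hgeq', addOne_ne h h2]
      have hhj : h j = f j - 1 := by omega
      -- h = addOne e i
      have hhe : h = addOne e i := by
        funext x
        rcases eq_or_ne x i with h2 | h2
        · subst h2; rw [addOne_same, hei]; omega
        · rcases eq_or_ne x j with h3 | h3
          · subst h3; rw [addOne_ne _ h2, hej]; omega
          · rw [addOne_ne _ h2, hex h3, hfgx h2, hhgx h3]
      -- f = addOne e j
      have hfe : f = addOne e j := by
        funext x
        rcases eq_or_ne x j with h2 | h2
        · subst h2; rw [addOne_same, hej]; omega
        · rw [addOne_ne _ h2, hex h2]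
      obtain ⟨hik, hilt, hirow, hipar⟩ := hadd
      obtain ⟨hjk, hjlt, hjrow, hjpar⟩ := haddj
      have hejh : e j = h j := by omega
      -- AddableCB e i
      have haddei : AddableCB tw k n e i := by
        refine ⟨hik, by rwa [hei], ?_, by rwa [hei]⟩
        rcases hirow with h0 | h0
        · exact Or.inl h0
        · refine Or.inr ?_
          rcases eq_or_ne (i - 1) j with h2 | h2
          · rw [hei, h2, hej]
            have hi0 : i ≠ 0 := by omega
            rw [hhj] at hjpar
            rw [h2] at h0
            have hij1 : i = j + 1 := by omega
            cases tw <;>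
              simp only [if_true, if_false, Bool.false_eq_true] at hipar hjpar <;> omega
          · rw [hei, hex h2]; exact h0
      -- AddableCB e j
      have haddej : AddableCB tw k n e j := by
        refine ⟨hjk, by rw [hejh]; exact hjlt, ?_, by rw [hejh]; exact hjpar⟩
        rcases hjrow with h0 | h0
        · exact Or.inl h0
        · refine Or.inr ?_
          rcases eq_or_ne (j - 1) i with h2 | h2
          · rw [hej, h2, hei]
            have hj0 : j ≠ 0 := by omega
            have hhj1 : h (j - 1) = f i + 1 := by rw [h2, hhi, hgi]
            rw [hhj1] at h0
            have hji1 : j = i + 1 := by omega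
            rw [hhj] at hjpar
            have hfj1 : 1 ≤ f j := by omega
            cases tw <;>
              simp only [if_true, if_false, Bool.false_eq_true] at hipar hjpar <;> omega
          · have hj0 : j ≠ 0 := by
              rintro rfl
              simp only [Nat.zero_sub] at h0
              exact lt_irrefl _ h0
            rw [hej, hex (by omega : j - 1 ≠ j)]
            have := hhgx (x := j - 1) (by omega)
            rw [hfgx h2]
            omega
      have hle' : e (i + 1) ≤ e i := by
        rcases eq_or_ne (i + 1) j with h2 | h2
        · rw [hei, h2, hej, ← h2]; omega
        · rw [hei, hex h2]; exact hle
      exact (ih e i haddei hle' hhe).tail ⟨j, haddej, hfe⟩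

lemma core_unique : ∀ N g, wt k g = N → IsTruncated k n g →
    ∀ Λ₁ Λ₂, IsTruncated k n Λ₁ → IsTruncated k n Λ₂ →
      IrredundantCB tw Λ₁ → IrredundantCB tw Λ₂ →
      InAbar tw k n Λ₁ g → InAbar tw k n Λ₂ g → Λ₁ = Λ₂ := by
  intro N
  induction N using Nat.strong_induction_on with
  | _ N ih =>
    intro g hwt hg Λ₁ Λ₂ htr₁ htr₂ hirr₁ hirr₂ hin₁ hin₂
    by_cases hgirr : IrredundantCB tw g
    · have key : ∀ Λ, IsTruncated k n Λ → InAbar tw k n Λ g → Λ = g := by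
        intro Λ htr hin
        rcases Relation.ReflTransGen.cases_tail hin with heq | ⟨c, hc, i, haddc, hgeqc⟩
        · exact heq.symm
        · exfalso
          have hct := inAbar_truncated htr hc
          have hle : c (i + 1) ≤ c i := hct.1.1 i (i + 1) (by omega)
          exact hgirr i (hgeqc ▸ add_removable haddc hle)
      rw [key Λ₁ htr₁ hin₁, key Λ₂ htr₂ hin₂]
    · rw [IrredundantCB] at hgirr
      push_neg at hgirr
      obtain ⟨i, hr⟩ := hgirr
      obtain ⟨hadd, hgeq, hftr⟩ := remove_spec hg hr
      set f := Function.update g i (g i - 1) with hfdef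
      have hle : f (i + 1) ≤ f i := hftr.1.1 i (i + 1) (by omega)
      have h₁ := reach_remove hirr₁ hin₁ f i hadd hle hgeq
      have h₂ := reach_remove hirr₂ hin₂ f i hadd hle hgeq
      have hik : i < k := hadd.1
      have hgi : 1 ≤ g i := by have := hr.1; omega
      exact ih (wt k f) (hwt ▸ wt_remove_lt hik hgi) f rfl hftr Λ₁ Λ₂ htr₁ htr₂ hirr₁ hirr₂ h₁ h₂

end Comb

section Main

variable {tw : Bool} {k n : ℕ}

/-- The irredundant core of a truncated diagram. -/
noncomputable def coreCB (tw : Bool) (k n : ℕ) (i : {Λ : ℕ → ℕ // IsTruncated k n Λ}) :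
    {Λ : {Λ : ℕ → ℕ // IsTruncated k n Λ} // IrredundantCB tw Λ.1} :=
  ⟨⟨Classical.choose (core_exists (tw := tw) (wt k i.1) i.1 rfl i.2),
      (Classical.choose_spec (core_exists (tw := tw) (wt k i.1) i.1 rfl i.2)).1⟩,
    (Classical.choose_spec (core_exists (tw := tw) (wt k i.1) i.1 rfl i.2)).2.1⟩

lemma coreCB_inAbar (i : {Λ : ℕ → ℕ // IsTruncated k n Λ}) :
    InAbar tw k n (coreCB tw k n i).1.1 i.1 :=
  (Classical.choose_spec (core_exists (tw := tw) (wt k i.1) i.1 rfl i.2)).2.2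

lemma inAbar_iff_coreCB (j : {Λ : {Λ : ℕ → ℕ // IsTruncated k n Λ} // IrredundantCB tw Λ.1})
    (i : {Λ : ℕ → ℕ // IsTruncated k n Λ}) :
    InAbar tw k n j.1.1 i.1 ↔ coreCB tw k n i = j := by
  constructor
  · intro h
    have heq : (coreCB tw k n i).1.1 = j.1.1 :=
      core_unique (wt k i.1) i.1 rfl i.2 (coreCB tw k n i).1.1 j.1.1
        (coreCB tw k n i).1.2 j.1.2 (coreCB tw k n i).2 j.2 (coreCB_inAbar i) h
    exact Subtype.ext (Subtype.ext heq)
  · rintro rfl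
    exact coreCB_inAbar i

end Main

/-- the whole space is the direct sum, over irredundant diagrams `Λ`, of
the spans of `Ā(Λ)`, and both `Ker Sq²` and `Im Sq²` decompose accordingly. -/
theorem stmt12 (tw : Bool) (k n : ℕ) (hkn : k ≤ n)
    (V : Type*) [AddCommGroup V] [Module (ZMod 2) V]
    (B : Module.Basis {Λ : ℕ → ℕ // IsTruncated k n Λ} (ZMod 2) V)
    (Sq : V →ₗ[ZMod 2] V)
    (hSq : ∀ Λ : {Λ : ℕ → ℕ // IsTruncated k n Λ},
      Sq (B Λ) = ∑ i ∈ Finset.range k,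
        if AddableCB tw k n Λ.1 i then extB k n B (addOne Λ.1 i) else 0) :
    (⨆ Λ : {Λ : {Λ : ℕ → ℕ // IsTruncated k n Λ} // IrredundantCB tw Λ.1},
        spanAbar tw k n B Λ.1) = ⊤ ∧
    iSupIndep (fun Λ : {Λ : {Λ : ℕ → ℕ // IsTruncated k n Λ} // IrredundantCB tw Λ.1} =>
        spanAbar tw k n B Λ.1) ∧
    LinearMap.ker Sq =
      (⨆ Λ : {Λ : {Λ : ℕ → ℕ // IsTruncated k n Λ} // IrredundantCB tw Λ.1},
        LinearMap.ker Sq ⊓ spanAbar tw k n B Λ.1) ∧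
    LinearMap.range Sq =
      (⨆ Λ : {Λ : {Λ : ℕ → ℕ // IsTruncated k n Λ} // IrredundantCB tw Λ.1},
        LinearMap.range Sq ⊓ spanAbar tw k n B Λ.1) := by
  classical
  set J := {Λ : {Λ : ℕ → ℕ // IsTruncated k n Λ} // IrredundantCB tw Λ.1} with hJ
  set P : J → Submodule (ZMod 2) V := fun j => spanAbar tw k n B j.1 with hP
  have hspan : ∀ j : J, P j = Submodule.span (ZMod 2)
      (⇑B '' {i : {Λ : ℕ → ℕ // IsTruncated k n Λ} | InAbar tw k n j.1.1 i.1}) := fun j => rfl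
  -- the whole space is the (possibly non-direct) sum
  have htop : (⨆ j : J, P j) = ⊤ := by
    refine eq_top_iff.mpr ?_
    rw [← B.span_eq]
    refine Submodule.span_le.mpr ?_
    rintro x ⟨i, rfl⟩
    exact Submodule.mem_iSup_of_mem (coreCB tw k n i)
      (Submodule.subset_span ⟨i, coreCB_inAbar i, rfl⟩)
  -- independence
  have hindep : iSupIndep P := by
    intro j
    have hle : (⨆ (j' : J) (_ : j' ≠ j), P j') ≤ Submodule.span (ZMod 2)
        (⇑B '' {i : {Λ : ℕ → ℕ // IsTruncated k n Λ} | InAbar tw k n j.1.1 i.1}ᶜ) := by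
      refine iSup_le fun j' => iSup_le fun hne => ?_
      rw [hspan j']
      refine Submodule.span_mono (Set.image_mono ?_)
      intro i hi
      simp only [Set.mem_compl_iff, Set.mem_setOf_eq] at hi ⊢
      intro hij
      exact hne (((inAbar_iff_coreCB j' i).mp hi).symm.trans ((inAbar_iff_coreCB j i).mp hij))
    rw [Submodule.disjoint_def]
    intro x hx1 hx2
    have m1 := B.mem_span_image.mp (by rw [hspan j] at hx1; exact hx1)
    have m2 := B.mem_span_image.mp (hle hx2)
    have hsupp : (B.repr x).support = ∅ :=
      Finset.eq_empty_iff_forall_notMem.mpr fun a ha => (m2 ha) (m1 ha)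
    have : B.repr x = 0 := Finsupp.support_eq_empty.mp hsupp
    exact B.repr.map_eq_zero_iff.mp this
  -- invariance of each summand under Sq
  have hinv : ∀ (j : J) (x : V), x ∈ P j → Sq x ∈ P j := by
    intro j x hx
    have hmap : Submodule.map Sq (P j) ≤ P j := by
      rw [hspan j, Submodule.map_span, Submodule.span_le]
      rintro y ⟨v, ⟨i, hi, rfl⟩, rfl⟩
      rw [hSq i]
      refine Submodule.sum_mem _ fun m _ => ?_
      split_ifs with hadd
      · have htr : IsTruncated k n (addOne i.1 m) := truncated_addOne i.2 hadd
        rw [extB, dif_pos htr]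
        exact Submodule.subset_span
          ⟨⟨addOne i.1 m, htr⟩, Relation.ReflTransGen.tail hi ⟨m, hadd, rfl⟩, rfl⟩
      · exact Submodule.zero_mem _
    exact hmap ⟨x, hx, rfl⟩
  refine ⟨htop, hindep, ?_, ?_⟩
  · -- kernel
    refine le_antisymm ?_ (iSup_le fun j => inf_le_left)
    intro x hx
    have hxtop : x ∈ ⨆ j : J, P j := by rw [htop]; trivial
    obtain ⟨c, hc, hsum⟩ := (Submodule.mem_iSup_iff_exists_finsupp P x).mp hxtop
    have hsq0 : Sq x = 0 := LinearMap.mem_ker.mp hx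
    have hsumsq : ∑ j ∈ c.support, Sq (c j) = 0 := by
      rw [← map_sum]
      have : ∑ j ∈ c.support, c j = x := hsum
      rw [this, hsq0]
    have hzero : ∀ j : J, Sq (c j) = 0 := by
      intro j
      by_cases hjs : j ∈ c.support
      · have h1 : Sq (c j) ∈ P j := hinv j _ (hc j)
        have h2 : Sq (c j) ∈ ⨆ (j' : J) (_ : j' ≠ j), P j' := by
          have hadd := Finset.add_sum_erase c.support (fun j' => Sq (c j')) hjs
          have heq : Sq (c j) = -∑ j' ∈ c.support.erase j, Sq (c j') :=
            eq_neg_of_add_eq_zero_left (hadd.trans hsumsq)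
          rw [heq]
          refine neg_mem (Submodule.sum_mem _ fun j' hj' => ?_)
          exact Submodule.mem_iSup_of_mem j'
            (Submodule.mem_iSup_of_mem (Finset.mem_erase.mp hj').1 (hinv j' _ (hc j')))
        exact Submodule.disjoint_def.mp (hindep j) _ h1 h2
      · rw [Finsupp.notMem_support_iff.mp hjs, map_zero]
    rw [← hsum]
    refine Submodule.sum_mem _ fun j _ => ?_
    exact Submodule.mem_iSup_of_mem j ⟨LinearMap.mem_ker.mpr (hzero j), hc j⟩
  · -- range
    have h1 : LinearMap.range Sq = ⨆ j : J, Submodule.map Sq (P j) := by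
      rw [LinearMap.range_eq_map, ← htop, Submodule.map_iSup]
    refine le_antisymm (h1.le.trans (iSup_mono fun j => le_inf LinearMap.map_le_range ?_))
      (iSup_le fun j => inf_le_left)
    rintro y ⟨v, hv, rfl⟩
    exact hinv j v hv
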